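/- arXiv:1106.2647 — 7 statements merged into one kernel-verified Lean document; each statement's English description precedes it below -/
import Mathlib

section
/- Every instance over the signature S of axiom scheme C3 (Composition): ([X⃗←x⃗](W = w) ∧ [X⃗←x⃗](Y = y)) → [X⃗←x⃗; W←w](Y = y), and of axiom scheme C4 (Effectiveness): [X←x; W⃗←w⃗](X = x), is valid with respect to the class M_a(Φ_S) of acceptable counterfactual structures over Φ_S. -/
/-! ## Signatures -/

structure Signature where
  exo : Type
  endo : Type
  exoFin : Fintype exo
  endoFin : Fintype endo
  endoDec : DecidableEq endo
  exoRange : exo → Type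
  range : endo → Type
  exoRangeFin : ∀ u, Fintype (exoRange u)
  rangeFin : ∀ X, Fintype (range X)
  exoRangeNe : ∀ u, Nonempty (exoRange u)
  rangeNe : ∀ X, Nonempty (range X)

attribute [instance] Signature.exoFin Signature.endoFin Signature.endoDec
  Signature.exoRangeFin Signature.rangeFin Signature.exoRangeNe Signature.rangeNe

/-- A context: an assignment of values to the exogenous variables. -/
abbrev Signature.Ctx (S : Signature) : Type := ∀ u : S.exo, S.exoRange u

/-- An assignment of values to the endogenous variables. -/
abbrev Signature.Asgn (S : Signature) : Type := ∀ X : S.endo, S.range X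

/-- An intervention `Y⃗ ← y⃗`: a partial assignment of values to (distinct)
endogenous variables. -/
abbrev Signature.Intervention (S : Signature) : Type := ∀ X : S.endo, Option (S.range X)

/-- The primitive propositions Φ_S : propositions `X = x` for `X ∈ V`, `x ∈ R(X)`. -/
abbrev Signature.Atom (S : Signature) : Type := Σ X : S.endo, S.range X

/-! ## Counterfactual structures -/

/-- A counterfactual structure over the primitive propositions `Φ`:
a finite set of worlds, a valuation, and a ternary relation `R`,
where `R w u v` means `u ⪯_w v`. -/
structure CStruct (Φ : Type) where
  World : Type
  worldFin : Fintype World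
  val : World → Φ → Prop
  R : World → World → World → Prop
  self_mem : ∀ w, ∃ v, R w w v
  refl_on : ∀ w u, (∃ v, R w u v) → R w u u
  trans_on : ∀ w u v x, (∃ y, R w u y) → (∃ y, R w v y) → (∃ y, R w x y) →
    R w u v → R w v x → R w u x
  centered : ∀ w u, u ≠ w → (R w w u ∧ ¬ R w u w)

attribute [instance] CStruct.worldFin

namespace CStruct

variable {Φ : Type} (M : CStruct Φ)

/-- `u ∈ W_w` : `u ⪯_w v` for some `v`. -/
def inW (w u : M.World) : Prop := ∃ v, M.R w u v

/-- `u ≺_w v` : `u ⪯_w v` and not `v ⪯_w u`. -/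
def lt (w u v : M.World) : Prop := M.R w u v ∧ ¬ M.R w v u

/-- The set of worlds in `W_w` satisfying `A` that are closest to `w`. -/
def closest (w : M.World) (A : M.World → Prop) : Set M.World :=
  {v | M.inW w v ∧ A v ∧ ∀ v', A v' → ¬ M.lt w v' v}

/-- `(M,w) ⊨ A > B` : every closest world to `w` satisfying `A` satisfies `B`. -/
def cfSat (w : M.World) (A B : M.World → Prop) : Prop :=
  ∀ v ∈ M.closest w A, B v

/-- Membership in `M⁺`: each `≺_w` is a strict total order on `W_w`. -/
def totalOrd : Prop :=
  ∀ w u v, M.inW w u → M.inW w v → u ≠ v → M.lt w u v ∨ M.lt w v u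

end CStruct

/-! ## Acceptable and full structures over Φ_S -/

/-- At every world, for each variable `X` exactly one proposition `X = x` is true. -/
def Acceptable (S : Signature) (M : CStruct S.Atom) : Prop :=
  ∀ (w : M.World) (X : S.endo), ∃! x : S.range X, M.val w ⟨X, x⟩

/-- Every assignment of values to the endogenous variables is realized at some
world of `W_w`, for every world `w`. -/
def Full (S : Signature) (M : CStruct S.Atom) : Prop :=
  ∀ (w : M.World) (a : S.Asgn), ∃ v, M.inW w v ∧ ∀ X : S.endo, M.val v ⟨X, a X⟩

/-- The antecedent `Y⃗ = y⃗` (a conjunction of atoms) of the counterfactual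
corresponding to the intervention `g`, as a predicate on worlds. -/
def intAnte (S : Signature) (M : CStruct S.Atom) (g : S.Intervention) :
    M.World → Prop :=
  fun v => ∀ (Y : S.endo) (y : S.range Y), g Y = some y → M.val v ⟨Y, y⟩

/-- `(M,w) ⊨ [Y⃗ ← y⃗](X = x)`, read as the counterfactual
`(Y₁ = y₁ ∧ ... ∧ Y_k = y_k) > (X = x)`. -/
def satBasic (S : Signature) (M : CStruct S.Atom) (w : M.World)
    (g : S.Intervention) (X : S.endo) (x : S.range X) : Prop :=
  M.cfSat w (intAnte S M g) (fun v => M.val v ⟨X, x⟩)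

/-- Recursive counterfactual structures `Mrec(Φ_S)`: full acceptable structures in
`M⁺` such that for each world there is a strict total order `≺` on the endogenous
variables such that if `W' ≺ Y` then setting `Y` (in addition to `X⃗`) does not
change the value of `W'` at the closest world. -/
def MRec (S : Signature) (M : CStruct S.Atom) : Prop :=
  Acceptable S M ∧ Full S M ∧ M.totalOrd ∧
  ∀ w : M.World, ∃ vlt : S.endo → S.endo → Prop, IsStrictTotalOrder S.endo vlt ∧
    ∀ W' Y : S.endo, vlt W' Y →
      ∀ g : S.Intervention, g W' = none → g Y = none →
        ∀ (y : S.range Y) (w' : S.range W'),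
          (satBasic S M w (Function.update g Y (some y)) W' w' ↔ satBasic S M w g W' w')

/-! ## Causal models -/

/-- A causal model over `S`: for each endogenous variable `X`, a structural
equation `F_X` mapping the values of all the other variables to a value of `X`. -/
structure CausalModel (S : Signature) where
  F : ∀ X : S.endo, S.Ctx → (∀ Y : {Y : S.endo // Y ≠ X}, S.range Y.1) → S.range X

namespace CausalModel

variable {S : Signature}

/-- `a` is a solution of the equations of `T_{g}` in context `u`. -/
def isSolution (T : CausalModel S) (g : S.Intervention) (u : S.Ctx) (a : S.Asgn) : Prop :=
  ∀ X : S.endo,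
    (∀ x : S.range X, g X = some x → a X = x) ∧
    (g X = none → a X = T.F X u (fun Y => a Y.1))

/-- `T` is recursive (acyclic): membership in `Trec(S)`. -/
def Recursive (T : CausalModel S) : Prop :=
  ∃ vlt : S.endo → S.endo → Prop, IsStrictTotalOrder S.endo vlt ∧
    ∀ X Y : S.endo, vlt X Y →
      ∀ (u : S.Ctx) (a a' : ∀ Z : {Z : S.endo // Z ≠ X}, S.range Z.1),
        (∀ Z : {Z : S.endo // Z ≠ X}, Z.1 ≠ Y → a Z = a' Z) →
        T.F X u a = T.F X u a'

/-- Membership in `Tun(S)`: all the equations of every `T_{X⃗ ← x⃗}` have a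
unique solution in every context. -/
def UniqueSolutions (T : CausalModel S) : Prop :=
  ∀ (g : S.Intervention) (u : S.Ctx), ∃! a : S.Asgn, T.isSolution g u a

end CausalModel

/-! ## The language Lprop(S) -/

/-- `Lprop(S)`: Boolean combinations of basic formulas `[Y⃗ ← y⃗](X = x)`. -/
inductive LProp (S : Signature) : Type
  | basic (g : S.Intervention) (X : S.endo) (x : S.range X) : LProp S
  | neg : LProp S → LProp S
  | and : LProp S → LProp S → LProp S

/-- Satisfaction of `Lprop(S)` formulas in a causal model, relative to a context. -/
def CausalModel.sat {S : Signature} (T : CausalModel S) (u : S.Ctx) : LProp S → Prop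
  | .basic g X x => ∀ a : S.Asgn, T.isSolution g u a → a X = x
  | .neg φ => ¬ CausalModel.sat T u φ
  | .and φ ψ => CausalModel.sat T u φ ∧ CausalModel.sat T u ψ

/-- Satisfaction of `Lprop(S)` formulas in a counterfactual structure over `Φ_S`. -/
def satL {S : Signature} (M : CStruct S.Atom) (w : M.World) : LProp S → Prop
  | .basic g X x => satBasic S M w g X x
  | .neg φ => ¬ satL M w φ
  | .and φ ψ => satL M w φ ∧ satL M w ψ

namespace LProp

variable {S : Signature}

def imp (φ ψ : LProp S) : LProp S := .neg (.and φ (.neg ψ))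

def or (φ ψ : LProp S) : LProp S := .neg (.and (.neg φ) (.neg ψ))

/-- Boolean evaluation of a formula treating the basic formulas as atoms. -/
def evalB (v : LProp S → Prop) : LProp S → Prop
  | .neg φ => ¬ evalB v φ
  | .and φ ψ => evalB v φ ∧ evalB v ψ
  | .basic g X x => v (.basic g X x)

/-- Instances of propositional tautologies in `Lprop(S)`. -/
def Taut (φ : LProp S) : Prop := ∀ v : LProp S → Prop, evalB v φ

/-- Disjunction of a nonempty list of formulas. -/
def bigOrNe : LProp S → List (LProp S) → LProp S
  | φ, [] => φ
  | φ, ψ :: l => or φ (bigOrNe ψ l)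

end LProp

/-- The proof system AXun(S): C0 (propositional tautologies), C1 (equality),
C2 (definiteness), C3 (composition), C4 (effectiveness), C5 (reversibility),
with modus ponens. -/
inductive AXunProv (S : Signature) : LProp S → Prop
  | taut {φ : LProp S} : LProp.Taut φ → AXunProv S φ
  | c1 (g : S.Intervention) (X : S.endo) (x x' : S.range X) (h : x ≠ x') :
      AXunProv S (LProp.imp (.basic g X x) (.neg (.basic g X x')))
  | c2 (g : S.Intervention) (X : S.endo) (x0 : S.range X) (l : List (S.range X))
      (h : x0 :: l = (Finset.univ : Finset (S.range X)).toList) :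
      AXunProv S (LProp.bigOrNe (.basic g X x0) (l.map (fun x => LProp.basic g X x)))
  | c3 (g : S.Intervention) (W : S.endo) (w : S.range W) (Y : S.endo) (y : S.range Y)
      (hW : g W = none) :
      AXunProv S (LProp.imp (.and (.basic g W w) (.basic g Y y))
        (.basic (Function.update g W (some w)) Y y))
  | c4 (g : S.Intervention) (X : S.endo) (x : S.range X) (h : g X = some x) :
      AXunProv S (.basic g X x)
  | c5 (g : S.Intervention) (W : S.endo) (w : S.range W) (Y : S.endo) (y : S.range Y)
      (hne : Y ≠ W) (hW : g W = none) (hY : g Y = none) :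
      AXunProv S (LProp.imp
        (.and (.basic (Function.update g W (some w)) Y y)
              (.basic (Function.update g Y (some y)) W w))
        (.basic g Y y))
  | mp {φ ψ : LProp S} : AXunProv S (LProp.imp φ ψ) → AXunProv S φ → AXunProv S ψ

/-! ## The language Lex(S) -/

/-- Boolean combinations of atoms `X = x`. -/
inductive BForm (S : Signature) : Type
  | atom (X : S.endo) (x : S.range X) : BForm S
  | neg : BForm S → BForm S
  | and : BForm S → BForm S → BForm S

def BForm.holds {S : Signature} (a : S.Asgn) : BForm S → Prop
  | .atom X x => a X = x
  | .neg φ => ¬ BForm.holds a φ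
  | .and φ ψ => BForm.holds a φ ∧ BForm.holds a ψ

/-- `Lex(S)`: Boolean combinations of basic formulas `[Y⃗ ← y⃗]ψ`, where `ψ` is a
Boolean combination of atoms. -/
inductive LEx (S : Signature) : Type
  | basic (g : S.Intervention) (ψ : BForm S) : LEx S
  | neg : LEx S → LEx S
  | and : LEx S → LEx S → LEx S

/-- Satisfaction of `Lex(S)` formulas in a causal model, relative to a context. -/
def CausalModel.satEx {S : Signature} (T : CausalModel S) (u : S.Ctx) : LEx S → Prop
  | .basic g ψ => ∀ a : S.Asgn, T.isSolution g u a → ψ.holds a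
  | .neg φ => ¬ CausalModel.satEx T u φ
  | .and φ ψ => CausalModel.satEx T u φ ∧ CausalModel.satEx T u ψ

/-! ## The counterfactual language L^C(Φ) and the system AX -/

/-- The language `L^C(Φ)`: primitive propositions closed under `∧`, `¬` and the
counterfactual connective `>` (`cf`). -/
inductive CForm (Φ : Type) : Type
  | atom : Φ → CForm Φ
  | fls : CForm Φ
  | neg : CForm Φ → CForm Φ
  | and : CForm Φ → CForm Φ → CForm Φ
  | cf : CForm Φ → CForm Φ → CForm Φ

namespace CForm

variable {Φ : Type}

def tr : CForm Φ := neg fls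

def or (φ ψ : CForm Φ) : CForm Φ := neg (and (neg φ) (neg ψ))

def imp (φ ψ : CForm Φ) : CForm Φ := or (neg φ) ψ

def iff (φ ψ : CForm Φ) : CForm Φ := and (imp φ ψ) (imp ψ φ)

/-- Boolean evaluation treating atoms and counterfactuals as atomic. -/
def evalB (v : CForm Φ → Prop) : CForm Φ → Prop
  | fls => False
  | neg φ => ¬ evalB v φ
  | and φ ψ => evalB v φ ∧ evalB v ψ
  | atom p => v (atom p)
  | cf φ ψ => v (cf φ ψ)

/-- Instances of propositional tautologies in `L^C(Φ)`. -/
def Taut (φ : CForm Φ) : Prop := ∀ v : CForm Φ → Prop, evalB v φ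

def bigAnd : List (CForm Φ) → CForm Φ
  | [] => tr
  | [φ] => φ
  | φ :: l => and φ (bigAnd l)

def bigOr : List (CForm Φ) → CForm Φ
  | [] => fls
  | [φ] => φ
  | φ :: l => or φ (bigOr l)

end CForm

/-- Provability in the system AX (axioms A0–A6, rules MP, RA1, RA2), augmented
with an arbitrary set `extra` of additional axioms. -/
inductive AXProv (Φ : Type) (extra : CForm Φ → Prop) : CForm Φ → Prop
  | taut {φ} : CForm.Taut φ → AXProv Φ extra φ
  | ax {φ} : extra φ → AXProv Φ extra φ
  | a1 (φ) : AXProv Φ extra (CForm.cf φ φ)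
  | a2 (φ ψ1 ψ2) : AXProv Φ extra
      (CForm.imp (CForm.and (CForm.cf φ ψ1) (CForm.cf φ ψ2)) (CForm.cf φ (CForm.and ψ1 ψ2)))
  | a3 (φ1 φ2 ψ) : AXProv Φ extra
      (CForm.imp (CForm.and (CForm.cf φ1 φ2) (CForm.cf φ1 ψ)) (CForm.cf (CForm.and φ1 φ2) ψ))
  | a4 (φ1 φ2 ψ) : AXProv Φ extra
      (CForm.imp (CForm.and (CForm.cf φ1 ψ) (CForm.cf φ2 ψ)) (CForm.cf (CForm.or φ1 φ2) ψ))
  | a5 : AXProv Φ extra (CForm.neg (CForm.cf CForm.tr CForm.fls))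
  | a6 (φ ψ) : AXProv Φ extra (CForm.imp φ (CForm.iff ψ (CForm.cf φ ψ)))
  | mp {φ ψ} : AXProv Φ extra (CForm.imp φ ψ) → AXProv Φ extra φ → AXProv Φ extra ψ
  | ra1 {φ φ' ψ} : AXProv Φ extra (CForm.iff φ φ') →
      AXProv Φ extra (CForm.imp (CForm.cf φ ψ) (CForm.cf φ' ψ))
  | ra2 {ψ ψ' φ} : AXProv Φ extra (CForm.imp ψ ψ') →
      AXProv Φ extra (CForm.imp (CForm.cf φ ψ) (CForm.cf φ ψ'))

/-- The axiom scheme A7. -/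
def A7Scheme (Φ : Type) : CForm Φ → Prop := fun θ =>
  ∃ φ ψ1 ψ2 : CForm Φ, θ = CForm.imp (CForm.cf φ (CForm.or ψ1 ψ2))
    (CForm.or (CForm.cf φ ψ1) (CForm.cf φ ψ2))

/-- Satisfaction of `L^C(Φ)` formulas in a counterfactual structure. -/
def CStruct.satC {Φ : Type} (M : CStruct Φ) : M.World → CForm Φ → Prop
  | w, .atom p => M.val w p
  | _, .fls => False
  | w, .neg φ => ¬ CStruct.satC M w φ
  | w, .and φ ψ => CStruct.satC M w φ ∧ CStruct.satC M w ψ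
  | w, .cf φ ψ => ∀ v ∈ M.closest w (fun u => CStruct.satC M u φ), CStruct.satC M v ψ

/-! ## The signature with three binary endogenous variables -/

/-- The signature with endogenous variables `V = {X1, X2, X3}` (as `Fin 3`), each
with range `{0, 1}` (as `Fin 2`), and an arbitrary exogenous part. -/
abbrev S3 (E : Type) (eF : Fintype E) (er : E → Type)
    (erF : ∀ e, Fintype (er e)) (erN : ∀ e, Nonempty (er e)) : Signature :=
  { exo := E
    endo := Fin 3
    exoFin := eF
    endoFin := inferInstance
    endoDec := inferInstance
    exoRange := er
    range := fun _ => Fin 2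
    exoRangeFin := erF
    rangeFin := fun _ => inferInstance
    exoRangeNe := erN
    rangeNe := fun _ => ⟨0⟩ }

/-- The intervention `Xi ← 1`. -/
def gI {E : Type} {eF : Fintype E} {er : E → Type}
    {erF : ∀ e, Fintype (er e)} {erN : ∀ e, Nonempty (er e)}
    (i : Fin 3) : (S3 E eF er erF erN).Intervention :=
  fun j => if j = i then some (1 : Fin 2) else none

/-- The intervention `Xi ← 1; Xj ← 1`. -/
def gII {E : Type} {eF : Fintype E} {er : E → Type}
    {erF : ∀ e, Fintype (er e)} {erN : ∀ e, Nonempty (er e)}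
    (i j : Fin 3) : (S3 E eF er erF erN).Intervention :=
  fun k => if k = i ∨ k = j then some (1 : Fin 2) else none

/-- The formula φ : `[X1←1](X2 = 1) ∧ [X1←1](X3 = 0) ∧ [X2←1](X3 = 1) ∧
[X2←1](X1 = 0) ∧ [X3←1](X1 = 1) ∧ [X3←1](X2 = 0)`. -/
def phi3 {E : Type} {eF : Fintype E} {er : E → Type}
    {erF : ∀ e, Fintype (er e)} {erN : ∀ e, Nonempty (er e)} :
    LProp (S3 E eF er erF erN) :=
  .and (.basic (gI 0) 1 1) <| .and (.basic (gI 0) 2 0) <| .and (.basic (gI 1) 2 1) <|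
    .and (.basic (gI 1) 0 0) <| .and (.basic (gI 2) 0 1) (.basic (gI 2) 1 0)

lemma CStruct.lt_trans' {Φ : Type} (M : CStruct Φ) (w u v x : M.World)
    (hu : M.inW w u) (hv : M.inW w v) (hx : M.inW w x)
    (h1 : M.lt w u v) (h2 : M.lt w v x) : M.lt w u x :=
  ⟨M.trans_on w u v x hu hv hx h1.1 h2.1,
   fun h => h2.2 (M.trans_on w x u v hx hu hv h h1.1)⟩

/-- If some `A`-world is strictly below `v`, then some world strictly below `v`
is among the closest `A`-worlds. -/
lemma exists_closest_below {Φ : Type} (M : CStruct Φ) (w v : M.World)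
    (A : M.World → Prop) (hvin : M.inW w v)
    (v' : M.World) (hA : A v') (hlt : M.lt w v' v) :
    ∃ u, M.lt w u v ∧ u ∈ M.closest w A := by
  classical
  let T := {u : M.World // M.inW w u ∧ A u}
  let r : T → T → Prop := fun a b => M.lt w a.1 b.1
  haveI : IsTrans T r := ⟨fun a b c hab hbc =>
    M.lt_trans' w a.1 b.1 c.1 a.2.1 b.2.1 c.2.1 hab hbc⟩
  haveI : IsIrrefl T r := ⟨fun a ha => ha.2 ha.1⟩
  have hwf : WellFounded r := Finite.wellFounded_of_trans_of_irrefl r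
  have hv'in : M.inW w v' := ⟨v, hlt.1⟩
  obtain ⟨m, hm, hmin⟩ := hwf.has_min {u : T | M.lt w u.1 v} ⟨⟨v', hv'in, hA⟩, hlt⟩
  refine ⟨m.1, hm, m.2.1, m.2.2, ?_⟩
  intro u hu hltu
  have huin : M.inW w u := ⟨m.1, hltu.1⟩
  exact hmin ⟨u, huin, hu⟩ (M.lt_trans' w u m.1 v huin m.2.1 hvin hltu hm) hltu

/-- Every instance of C3 (Composition) and of C4 (Effectiveness)
over the signature `S` is valid with respect to the class `M_a(Φ_S)` of
acceptable counterfactual structures. -/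
theorem stmt0 (S : Signature) (M : CStruct S.Atom) (hacc : Acceptable S M) :
    (∀ (w : M.World) (g : S.Intervention) (W : S.endo) (wv : S.range W)
        (Y : S.endo) (y : S.range Y), g W = none →
        satBasic S M w g W wv → satBasic S M w g Y y →
        satBasic S M w (Function.update g W (some wv)) Y y) ∧
    (∀ (w : M.World) (g : S.Intervention) (X : S.endo) (x : S.range X),
        g X = some x → satBasic S M w g X x) := by
  classical
  constructor
  · intro w g W wv Y y hgW hsW hsY v hv
    obtain ⟨hvin, hvante, hvmin⟩ := hv
    -- `v` satisfies the antecedent corresponding to `g`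
    have hvg : intAnte S M g v := by
      intro Z z hZ
      have hZW : Z ≠ W := fun h => by subst h; rw [hgW] at hZ; cases hZ
      exact hvante Z z (by rw [Function.update_of_ne hZW]; exact hZ)
    -- `v` is among the closest `g`-worlds
    have hclosest : v ∈ M.closest w (intAnte S M g) := by
      refine ⟨hvin, hvg, ?_⟩
      intro v' hv' hlt
      obtain ⟨v'', hlt'', hcl''⟩ := exists_closest_below M w v (intAnte S M g) hvin v' hv' hlt
      have hWv'' : M.val v'' ⟨W, wv⟩ := hsW v'' hcl''
      have hante'' : intAnte S M (Function.update g W (some wv)) v'' := by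
        intro Z z hZ
        by_cases hZW : Z = W
        · subst hZW
          rw [Function.update_self] at hZ
          obtain rfl : wv = z := Option.some.inj hZ
          exact hWv''
        · rw [Function.update_of_ne hZW] at hZ
          exact hcl''.2.1 Z z hZ
      exact hvmin v'' hante'' hlt''
    exact hsY v hclosest
  · intro w g X x h v hv
    exact hv.2.1 X x h
end

section
/- Every instance over the signature S of axiom scheme C2 (Definiteness): ⋁_{x ∈ R(X)} [Y⃗←y⃗](X = x), is valid with respect to the class M_a^+(Φ_S) of acceptable counterfactual structures over Φ_S in which each ≺_w is a strict total order. -/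
/-- Every instance of C2 (Definiteness),
`⋁_{x ∈ R(X)} [Y⃗←y⃗](X = x)`, is valid with respect to `M_a⁺(Φ_S)`. -/
theorem stmt1 (S : Signature) (M : CStruct S.Atom) (hacc : Acceptable S M)
    (htot : M.totalOrd) (w : M.World) (g : S.Intervention) (X : S.endo) :
    ∃ x : S.range X, satBasic S M w g X x := by
  by_cases h : ∃ v, v ∈ M.closest w (intAnte S M g)
  · obtain ⟨v, hv⟩ := h
    obtain ⟨x, hx, -⟩ := hacc v X
    refine ⟨x, fun v' hv' => ?_⟩
    have : v' = v := by
      by_contra hne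
      rcases htot w v' v hv'.1 hv.1 hne with hlt | hlt
      · exact hv.2.2 v' hv'.2.1 hlt
      · exact hv'.2.2 v hv.2.1 hlt
    rwa [this]
  · obtain ⟨x⟩ := S.rangeNe X
    exact ⟨x, fun v hv => absurd ⟨v, hv⟩ h⟩
end

section
/- Every instance over the signature S of axiom scheme C1 (Equality): [Y⃗←y⃗](X = x) → ¬[Y⃗←y⃗](X = x') for x, x' ∈ R(X) with x ≠ x', is valid with respect to the class M_f(Φ_S) of full acceptable counterfactual structures over Φ_S. -/
/-- Every instance of C1 (Equality),
`[Y⃗←y⃗](X = x) → ¬[Y⃗←y⃗](X = x')` for `x ≠ x'`, is valid with respect to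
the class `M_f(Φ_S)` of full acceptable counterfactual structures. -/
theorem stmt2 (S : Signature) (M : CStruct S.Atom) (hacc : Acceptable S M)
    (hfull : Full S M) (w : M.World) (g : S.Intervention) (X : S.endo)
    (x x' : S.range X) (hne : x ≠ x') :
    satBasic S M w g X x → ¬ satBasic S M w g X x' := by
  classical
  intro h h'
  -- build a total assignment extending g
  let a : S.Asgn := fun Y => (g Y).getD (Classical.arbitrary _)
  obtain ⟨v0, hv0W, hv0⟩ := hfull w a
  have hv0A : intAnte S M g v0 := by
    intro Y y hgy
    have hay : a Y = y := by simp [a, hgy]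
    have := hv0 Y
    rwa [hay] at this
  -- find a minimal world in W_w satisfying the antecedent
  let r : M.World → M.World → Prop := fun p q => M.lt w p q ∧ M.inW w p ∧ M.inW w q
  have htrans : Transitive r := by
    rintro p q s ⟨⟨hpq, hnqp⟩, ip, iq⟩ ⟨⟨hqs, hnsq⟩, _, is⟩
    refine ⟨⟨M.trans_on w p q s ip iq is hpq hqs, ?_⟩, ip, is⟩
    intro hsp
    exact hnsq (M.trans_on w s p q is ip iq hsp hpq)
  have hirr : ∀ p, ¬ r p p := by
    rintro p ⟨⟨hp, hnp⟩, _⟩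
    exact hnp hp
  haveI : IsTrans M.World r := ⟨htrans⟩
  haveI : IsIrrefl M.World r := ⟨hirr⟩
  have wf : WellFounded r := Finite.wellFounded_of_trans_of_irrefl r
  obtain ⟨m, hmset, hmin⟩ :=
    wf.has_min {v | M.inW w v ∧ intAnte S M g v} ⟨v0, hv0W, hv0A⟩
  obtain ⟨hmW, hmA⟩ := hmset
  have hmclosest : m ∈ M.closest w (intAnte S M g) := by
    refine ⟨hmW, hmA, ?_⟩
    intro v' hA hlt
    have hv'W : M.inW w v' := ⟨m, hlt.1⟩
    exact hmin v' ⟨hv'W, hA⟩ ⟨hlt, hv'W, hmW⟩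
  have hx : M.val m ⟨X, x⟩ := h m hmclosest
  have hx' : M.val m ⟨X, x'⟩ := h' m hmclosest
  obtain ⟨x0, _, hx0u⟩ := hacc m X
  exact hne ((hx0u x hx).trans (hx0u x' hx').symm)
end

section
/- Every instance over the signature S of axiom scheme C5 (Reversibility): ([X⃗←x⃗; W←w](Y = y) ∧ [X⃗←x⃗; Y←y](W = w)) → [X⃗←x⃗](Y = y), for distinct endogenous variables Y ≠ W not occurring in X⃗, is valid with respect to the class Mrec(Φ_S) of recursive counterfactual structures. -/
/-- Every instance of C5 (Reversibility),
`([X⃗←x⃗; W←w](Y = y) ∧ [X⃗←x⃗; Y←y](W = w)) → [X⃗←x⃗](Y = y)` for distinct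
`Y ≠ W` not occurring in `X⃗`, is valid with respect to the class `Mrec(Φ_S)`
of recursive counterfactual structures. -/
theorem stmt5 (S : Signature) (M : CStruct S.Atom) (hM : MRec S M)
    (w : M.World) (g : S.Intervention) (W Y : S.endo) (hne : Y ≠ W)
    (hW : g W = none) (hY : g Y = none) (wv : S.range W) (y : S.range Y) :
    satBasic S M w (Function.update g W (some wv)) Y y →
    satBasic S M w (Function.update g Y (some y)) W wv →
    satBasic S M w g Y y := by
  intro h1 h2
  obtain ⟨hacc, hfull, htot, hrec⟩ := hM
  obtain ⟨vlt, hSTO, hR⟩ := hrec w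
  -- strengthening the antecedent by updating a variable that was `none`
  have hmono : ∀ (Z : S.endo) (z : S.range Z), g Z = none →
      ∀ v, intAnte S M (Function.update g Z (some z)) v → intAnte S M g v := by
    intro Z z hZ v hv Y' y' hY'
    apply hv
    rcases eq_or_ne Y' Z with rfl | hne'
    · rw [hY'] at hZ; cases hZ
    · rw [Function.update_of_ne hne']; exact hY'
  rcases (by have t := hSTO.trichotomous W Y; tauto : vlt W Y ∨ W = Y ∨ vlt Y W) with hWY | hEq | hYW
  · -- W comes before Y: setting Y does not change W
    have hWv : satBasic S M w g W wv := (hR W Y hWY g hW hY y wv).mp h2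
    intro v hv
    have hvW : M.val v ⟨W, wv⟩ := hWv v hv
    apply h1
    refine ⟨hv.1, ?_, ?_⟩
    · intro Z z hZ
      rcases eq_or_ne Z W with rfl | hne'
      · rw [Function.update_self] at hZ
        cases hZ; exact hvW
      · rw [Function.update_of_ne hne'] at hZ
        exact hv.2.1 Z z hZ
    · intro v' hv'
      exact hv.2.2 v' (hmono W wv hW v' hv')
  · exact absurd hEq.symm hne
  · -- Y comes before W: setting W does not change Y
    exact (hR Y W hYW g hY hW wv y).mp h1
end

section
/- Every instance over the signature S of the strong Composition scheme: [X⃗←x⃗](W = w) → ([X⃗←x⃗](Y = y) ↔ [X⃗←x⃗; W←w](Y = y)), for an endogenous variable W not occurring in X⃗ and Y ≠ W, is valid with respect to the class Mrec(Φ_S) of recursive counterfactual structures. -/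
/-- If some world of `W_w` satisfies `A`, then `closest w A` is nonempty. -/
lemma closest_nonempty {Φ : Type} (M : CStruct Φ) (w : M.World) (A : M.World → Prop)
    (h : ∃ v, M.inW w v ∧ A v) : ∃ v, v ∈ M.closest w A := by
  classical
  -- work on the subtype of worlds in W_w satisfying A
  let α := {v : M.World // M.inW w v ∧ A v}
  haveI : Finite α := Subtype.finite
  haveI : Nonempty α := by obtain ⟨v, hv⟩ := h; exact ⟨⟨v, hv⟩⟩
  let r : α → α → Prop := fun a b => M.lt w a.1 b.1
  haveI : IsIrrefl α r := ⟨fun a ha => ha.2 ha.1⟩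
  haveI : IsTrans α r := by
    constructor
    intro a b c hab hbc
    have hAc : M.inW w c.1 := c.2.1
    have hAa : M.inW w a.1 := a.2.1
    have hAb : M.inW w b.1 := b.2.1
    refine ⟨M.trans_on w a.1 b.1 c.1 hAa hAb hAc hab.1 hbc.1, ?_⟩
    intro hca
    exact hbc.2 (M.trans_on w c.1 a.1 b.1 hAc hAa hAb hca hab.1)
  have wf : WellFounded r := Finite.wellFounded_of_trans_of_irrefl r
  obtain ⟨m, -, hm⟩ := wf.has_min Set.univ ⟨Classical.arbitrary α, trivial⟩
  refine ⟨m.1, m.2.1, m.2.2, ?_⟩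
  intro v' hv' hlt
  have hin : M.inW w v' := ⟨m.1, hlt.1⟩
  exact hm ⟨v', hin, hv'⟩ trivial hlt

/-- With `totalOrd`, closest worlds are unique. -/
lemma closest_unique {Φ : Type} (M : CStruct Φ) (hT : M.totalOrd)
    (w : M.World) (A : M.World → Prop) {v1 v2 : M.World}
    (h1 : v1 ∈ M.closest w A) (h2 : v2 ∈ M.closest w A) : v1 = v2 := by
  by_contra hne
  rcases hT w v1 v2 h1.1 h2.1 hne with h | h
  · exact h2.2.2 v1 h1.2.1 h
  · exact h1.2.2 v2 h2.2.1 h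

/-- Every instance of the strong Composition scheme,
`[X⃗←x⃗](W = w) → ([X⃗←x⃗](Y = y) ↔ [X⃗←x⃗; W←w](Y = y))` for `W` not in `X⃗`
and `Y ≠ W`, is valid with respect to `Mrec(Φ_S)`. -/
theorem stmt6 (S : Signature) (M : CStruct S.Atom) (hM : MRec S M)
    (w : M.World) (g : S.Intervention) (W Y : S.endo) (hne : Y ≠ W)
    (hW : g W = none) (wv : S.range W) (y : S.range Y) :
    satBasic S M w g W wv →
    (satBasic S M w g Y y ↔ satBasic S M w (Function.update g W (some wv)) Y y) := by
  classical
  intro hsatW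
  obtain ⟨-, hFull, hTot, -⟩ := hM
  set g' : S.Intervention := Function.update g W (some wv) with hg'
  -- the antecedent of g is satisfiable in W_w by fullness
  have hsat : ∃ v, M.inW w v ∧ intAnte S M g v := by
    set a : S.Asgn := fun X => (g X).getD (Classical.arbitrary (S.range X)) with ha
    obtain ⟨v, hv1, hv2⟩ := hFull w a
    refine ⟨v, hv1, ?_⟩
    intro Z z hZ
    have : a Z = z := by simp [ha, hZ]
    rw [← this]; exact hv2 Z
  obtain ⟨v, hv⟩ := closest_nonempty M w (intAnte S M g) hsat
  -- v satisfies W = wv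
  have hvW : M.val v ⟨W, wv⟩ := hsatW v hv
  -- g'-antecedent implies g-antecedent
  have himp : ∀ u, intAnte S M g' u → intAnte S M g u := by
    intro u hu Z z hZ
    refine hu Z z ?_
    have hZW : Z ≠ W := by rintro rfl; rw [hW] at hZ; exact Option.some_ne_none z hZ.symm
    rw [hg', Function.update_of_ne hZW, hZ]
  -- v satisfies the g'-antecedent
  have hvg' : intAnte S M g' v := by
    intro Z z hZ
    by_cases hZW : Z = W
    · subst hZW
      rw [hg', Function.update_self] at hZ
      cases hZ
      exact hvW
    · rw [hg', Function.update_of_ne hZW] at hZ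
      exact hv.2.1 Z z hZ
  -- v is also the closest g'-world
  have hv' : v ∈ M.closest w (intAnte S M g') := by
    refine ⟨hv.1, hvg', ?_⟩
    intro u hu hlt
    exact hv.2.2 u (himp u hu) hlt
  constructor
  · intro h u hu
    have : u = v := closest_unique M hTot w _ hu hv'
    subst this
    exact h u hv
  · intro h u hu
    have : u = v := closest_unique M hTot w _ hu hv
    subst this
    exact h u hv'
end

section
/- For every recursive causal model T ∈ Trec(S) there exist a recursive counterfactual structure M ∈ Mrec(Φ_S) and, for each context u⃗, a world w_{u⃗} of M, such that for all formulas φ ∈ Lprop(S): (T, u⃗) ⊨ φ if and only if (M, w_{u⃗}) ⊨ φ. -/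
/-! ## Auxiliary machinery for Statement 7 -/

section Stmt7Aux

variable {S : Signature}

/-- The recursiveness property of a causal model with respect to a given order. -/
def RecHyp (T : CausalModel S) (vlt : S.endo → S.endo → Prop) : Prop :=
  ∀ X Y : S.endo, vlt X Y →
    ∀ (u : S.Ctx) (a a' : ∀ Z : {Z : S.endo // Z ≠ X}, S.range Z.1),
      (∀ Z : {Z : S.endo // Z ≠ X}, Z.1 ≠ Y → a Z = a' Z) →
      T.F X u a = T.F X u a'

open Classical in
/-- The canonical solution of `T_g` in context `u`, defined by recursion along `vlt`. -/
noncomputable def solFun (T : CausalModel S) (vlt : S.endo → S.endo → Prop)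
    (hwf : WellFounded vlt) (g : S.Intervention) (u : S.Ctx) : S.Asgn :=
  hwf.fix (C := fun X => S.range X) (fun X IH =>
    (g X).elim
      (T.F X u (fun Y => if h : vlt Y.1 X then IH Y.1 h else Classical.arbitrary _))
      (fun x => x))

open Classical in
lemma solFun_eq (T : CausalModel S) (vlt : S.endo → S.endo → Prop)
    (hwf : WellFounded vlt) (g : S.Intervention) (u : S.Ctx) (X : S.endo) :
    solFun T vlt hwf g u X =
      (g X).elim
        (T.F X u (fun Y => if h : vlt Y.1 X then solFun T vlt hwf g u Y.1
          else Classical.arbitrary _))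
        (fun x => x) :=
  hwf.fix_eq _ X

/-- If `a` and `a'` agree on all variables `vlt`-below `X`, then `F_X` gives the
same value. -/
lemma F_congr (T : CausalModel S) (vlt : S.endo → S.endo → Prop)
    (hST : IsStrictTotalOrder S.endo vlt) (hrec : RecHyp T vlt)
    (X : S.endo) (u : S.Ctx) (a a' : ∀ Z : {Z : S.endo // Z ≠ X}, S.range Z.1)
    (h : ∀ Z : {Z : S.endo // Z ≠ X}, vlt Z.1 X → a Z = a' Z) :
    T.F X u a = T.F X u a' := by
  classical
  haveI := hST
  have key : ∀ s : Finset {Z : S.endo // Z ≠ X},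
      ∀ a a' : (∀ Z : {Z : S.endo // Z ≠ X}, S.range Z.1),
      (∀ Z, Z ∉ s → a Z = a' Z) → (∀ Z ∈ s, ¬ vlt Z.1 X) → T.F X u a = T.F X u a' := by
    intro s
    induction s using Finset.induction_on with
    | empty =>
      intro a a' h1 _
      have : a = a' := funext fun Z => h1 Z (Finset.notMem_empty Z)
      rw [this]
    | @insert Y s hYs ih =>
      intro a a' h1 h2
      set a'' : ∀ Z : {Z : S.endo // Z ≠ X}, S.range Z.1 :=
        Function.update a' Y (a Y) with ha''
      have hvXY : vlt X Y.1 := by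
        rcases trichotomous_of vlt Y.1 X with h | h | h
        · exact absurd h (h2 Y (Finset.mem_insert_self Y s))
        · exact absurd h Y.2
        · exact h
      have h3 : T.F X u a'' = T.F X u a' := by
        refine hrec X Y.1 hvXY u a'' a' ?_
        intro Z hZ
        exact Function.update_of_ne (fun e => hZ (by rw [e])) _ a'
      have h4 : T.F X u a = T.F X u a'' := by
        refine ih a a'' ?_ ?_
        · intro Z hZ
          rcases eq_or_ne Z Y with rfl | hne
          · rw [ha'', Function.update_self]
          · rw [ha'', Function.update_of_ne hne]
            exact h1 Z (by simp [hne, hZ])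
        · intro Z hZ
          exact h2 Z (Finset.mem_insert_of_mem hZ)
      rw [h4, h3]
  refine key (Finset.univ.filter (fun Z => ¬ vlt Z.1 X)) a a' ?_ ?_
  · intro Z hZ
    apply h
    by_contra hv
    exact hZ (Finset.mem_filter.mpr ⟨Finset.mem_univ _, hv⟩)
  · intro Z hZ
    exact (Finset.mem_filter.mp hZ).2

lemma solFun_isSolution (T : CausalModel S) (vlt : S.endo → S.endo → Prop)
    (hST : IsStrictTotalOrder S.endo vlt) (hrec : RecHyp T vlt)
    (hwf : WellFounded vlt) (g : S.Intervention) (u : S.Ctx) :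
    T.isSolution g u (solFun T vlt hwf g u) := by
  intro X
  constructor
  · intro x hx
    rw [solFun_eq, hx]
    rfl
  · intro hx
    rw [solFun_eq, hx]
    simp only [Option.elim]
    refine F_congr T vlt hST hrec X u _ _ ?_
    intro Z hZ
    rw [dif_pos hZ]

lemma solFun_unique (T : CausalModel S) (vlt : S.endo → S.endo → Prop)
    (hST : IsStrictTotalOrder S.endo vlt) (hrec : RecHyp T vlt)
    (hwf : WellFounded vlt) (g : S.Intervention) (u : S.Ctx) (a : S.Asgn)
    (ha : T.isSolution g u a) : a = solFun T vlt hwf g u := by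
  funext X
  refine hwf.induction (C := fun X => a X = solFun T vlt hwf g u X) X ?_
  intro X IH
  cases hg : g X with
  | some x =>
    rw [(ha X).1 x hg, solFun_eq, hg]
    rfl
  | none =>
    rw [(ha X).2 hg, solFun_eq, hg]
    simp only [Option.elim]
    refine F_congr T vlt hST hrec X u _ _ ?_
    intro Z hZ
    rw [dif_pos hZ]
    exact IH Z.1 hZ

/-- Intervening additionally on a later variable does not change the solution's
value at an earlier variable. -/
lemma solFun_update (T : CausalModel S) (vlt : S.endo → S.endo → Prop)
    (hST : IsStrictTotalOrder S.endo vlt) (hrec : RecHyp T vlt)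
    (hwf : WellFounded vlt) (g : S.Intervention) (u : S.Ctx)
    (Y : S.endo) (y : S.range Y) :
    ∀ X : S.endo, vlt X Y →
      solFun T vlt hwf (Function.update g Y (some y)) u X = solFun T vlt hwf g u X := by
  haveI := hST
  intro X
  refine hwf.induction
    (C := fun X => vlt X Y →
      solFun T vlt hwf (Function.update g Y (some y)) u X = solFun T vlt hwf g u X) X ?_
  intro X IH hXY
  have hXne : X ≠ Y := fun e => absurd hXY (e ▸ irrefl_of vlt X)
  have hg : Function.update g Y (some y) X = g X := Function.update_of_ne hXne _ g
  cases hgX : g X with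
  | some x =>
    rw [solFun_eq, solFun_eq, hg, hgX]
    rfl
  | none =>
    rw [solFun_eq, solFun_eq, hg, hgX]
    simp only [Option.elim]
    refine F_congr T vlt hST hrec X u _ _ ?_
    intro Z hZ
    rw [dif_pos hZ, dif_pos hZ]
    exact IH Z.1 hZ (trans_of vlt hZ hXY)

open Classical in
/-- The weight of a variable: the number of variables strictly after it. -/
noncomputable def weight (vlt : S.endo → S.endo → Prop) (X : S.endo) : ℕ :=
  (Finset.univ.filter (fun Y => vlt X Y)).card

lemma weight_lt (vlt : S.endo → S.endo → Prop) (hST : IsStrictTotalOrder S.endo vlt)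
    {X Y : S.endo} (h : vlt X Y) : weight vlt Y < weight vlt X := by
  classical
  haveI := hST
  unfold weight
  apply Finset.card_lt_card
  have hsub : Finset.univ.filter (fun Z => vlt Y Z) ⊆ Finset.univ.filter (fun Z => vlt X Z) := by
    intro Z hZ
    simp only [Finset.mem_filter, Finset.mem_univ, true_and] at hZ ⊢
    exact trans_of vlt h hZ
  refine (Finset.ssubset_iff_of_subset hsub).mpr ⟨Y, ?_, ?_⟩
  · simp [h]
  · simp [irrefl_of vlt Y]

lemma weight_inj (vlt : S.endo → S.endo → Prop) (hST : IsStrictTotalOrder S.endo vlt)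
    {X Y : S.endo} (h : X ≠ Y) : weight vlt X ≠ weight vlt Y := by
  haveI := hST
  rcases trichotomous_of vlt X Y with hc | hc | hc
  · exact (Nat.ne_of_gt (weight_lt vlt hST hc))
  · exact absurd hc h
  · exact (Nat.ne_of_lt (weight_lt vlt hST hc))

lemma sum_two_pow_range (W : ℕ) : (∑ i ∈ Finset.range W, 2 ^ i) + 1 = 2 ^ W := by
  induction W with
  | zero => simp
  | succ n ih =>
    rw [Finset.sum_range_succ, pow_succ]
    omega

lemma sum_two_pow_lt (vlt : S.endo → S.endo → Prop) (hST : IsStrictTotalOrder S.endo vlt)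
    (s : Finset S.endo) (W : ℕ) (h : ∀ X ∈ s, weight vlt X < W) :
    ∑ X ∈ s, 2 ^ weight vlt X < 2 ^ W := by
  classical
  have h1 : ∑ X ∈ s, 2 ^ weight vlt X = ∑ k ∈ s.image (weight vlt), 2 ^ k := by
    rw [Finset.sum_image]
    intro a _ b _ hab
    by_contra hne
    exact weight_inj vlt hST hne hab
  rw [h1]
  have h2 : s.image (weight vlt) ⊆ Finset.range W := by
    intro k hk
    simp only [Finset.mem_image] at hk
    obtain ⟨X, hX, rfl⟩ := hk
    exact Finset.mem_range.mpr (h X hX)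
  calc ∑ k ∈ s.image (weight vlt), 2 ^ k ≤ ∑ k ∈ Finset.range W, 2 ^ k :=
        Finset.sum_le_sum_of_subset h2
    _ < 2 ^ W := by have := sum_two_pow_range W; omega

open Classical in
/-- The set of variables whose (uninterverned) equation is violated by `a`. -/
noncomputable def viol (M : CausalModel S) (u : S.Ctx) (a : S.Asgn) : Finset S.endo :=
  Finset.univ.filter (fun X => ¬ (a X = M.F X u (fun Y => a Y.1)))

/-- The rank of an assignment: lexicographic encoding of its violation set. -/
noncomputable def rank (vlt : S.endo → S.endo → Prop) (M : CausalModel S)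
    (u : S.Ctx) (a : S.Asgn) : ℕ :=
  ∑ X ∈ viol M u a, 2 ^ weight vlt X

/-- Key lemma: among the assignments consistent with `g`, the solution of `T_g`
has strictly minimal rank. -/
lemma rank_sol_lt (M : CausalModel S) (vlt : S.endo → S.endo → Prop)
    (hST : IsStrictTotalOrder S.endo vlt) (hrec : RecHyp M vlt)
    (hwf : WellFounded vlt) (g : S.Intervention) (u : S.Ctx) (b : S.Asgn)
    (hb : ∀ (X : S.endo) (x : S.range X), g X = some x → b X = x)
    (hne : b ≠ solFun M vlt hwf g u) :
    rank vlt M u (solFun M vlt hwf g u) < rank vlt M u b := by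
  classical
  haveI := hST
  set s := solFun M vlt hwf g u with hs
  have hsol := solFun_isSolution M vlt hST hrec hwf g u
  have hD : {X | s X ≠ b X}.Nonempty := by
    rcases Function.ne_iff.mp hne with ⟨X, hX⟩
    exact ⟨X, fun e => hX e.symm⟩
  obtain ⟨X0, hX0mem, hX0min⟩ := hwf.has_min _ hD
  have hbelow : ∀ Z, vlt Z X0 → s Z = b Z := by
    intro Z h
    by_contra hne'
    exact hX0min Z hne' h
  have hgX0 : g X0 = none := by
    cases hg : g X0 with
    | none => rfl
    | some x =>
      exact absurd ((hsol X0).1 x hg |>.trans (hb X0 x hg).symm) hX0mem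
  have hsX0 : X0 ∉ viol M u s := by
    simp only [viol, Finset.mem_filter, Finset.mem_univ, true_and, not_not]
    exact (hsol X0).2 hgX0
  have hbX0 : X0 ∈ viol M u b := by
    simp only [viol, Finset.mem_filter, Finset.mem_univ, true_and]
    intro heq
    apply hX0mem
    show solFun M vlt hwf g u X0 = b X0
    have hF : M.F X0 u (fun Y => b Y.1) = M.F X0 u (fun Y => s Y.1) :=
      F_congr M vlt hST hrec X0 u _ _ (fun Z hZ => (hbelow Z.1 hZ).symm)
    rw [(hsol X0).2 hgX0, ← hF, heq]
  have hsame : ∀ Z, vlt Z X0 → (Z ∈ viol M u s ↔ Z ∈ viol M u b) := by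
    intro Z hZ
    have h1 : M.F Z u (fun Y => s Y.1) = M.F Z u (fun Y => b Y.1) :=
      F_congr M vlt hST hrec Z u _ _ (fun W hW => hbelow W.1 (trans_of vlt hW hZ))
    simp only [viol, Finset.mem_filter, Finset.mem_univ, true_and, h1, hbelow Z hZ]
  unfold rank
  rw [← Finset.sum_filter_add_sum_filter_not (viol M u s) (fun Z => vlt Z X0),
      ← Finset.sum_filter_add_sum_filter_not (viol M u b) (fun Z => vlt Z X0)]
  have hfeq : (viol M u s).filter (fun Z => vlt Z X0) =
      (viol M u b).filter (fun Z => vlt Z X0) := by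
    ext Z
    simp only [Finset.mem_filter]
    constructor
    · rintro ⟨h1, h2⟩; exact ⟨(hsame Z h2).mp h1, h2⟩
    · rintro ⟨h1, h2⟩; exact ⟨(hsame Z h2).mpr h1, h2⟩
  rw [hfeq]
  apply Nat.add_lt_add_left
  have hlt : ∑ Z ∈ (viol M u s).filter (fun Z => ¬ vlt Z X0), 2 ^ weight vlt Z
      < 2 ^ weight vlt X0 := by
    apply sum_two_pow_lt vlt hST
    intro Z hZ
    simp only [Finset.mem_filter] at hZ
    have hZX0 : Z ≠ X0 := fun e => hsX0 (e ▸ hZ.1)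
    rcases trichotomous_of vlt Z X0 with hc | hc | hc
    · exact absurd hc hZ.2
    · exact absurd hc hZX0
    · exact weight_lt vlt hST hc
  have hge : 2 ^ weight vlt X0
      ≤ ∑ Z ∈ (viol M u b).filter (fun Z => ¬ vlt Z X0), 2 ^ weight vlt Z := by
    refine Finset.single_le_sum (f := fun Z => 2 ^ weight vlt Z) (fun i _ => Nat.zero_le _) ?_
    simp only [Finset.mem_filter]
    exact ⟨hbX0, irrefl_of vlt X0⟩
  omega

lemma mul_add_lt {n p q i j : ℕ} (hi : i < n) (hpq : p < q) :
    p * n + i < q * n + j := by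
  have h1 : p * n + i < (p + 1) * n := by
    rw [add_mul, one_mul]; omega
  have h2 : (p + 1) * n ≤ q * n := Nat.mul_le_mul_right n hpq
  omega

lemma mul_add_inj {n p q i j : ℕ} (hi : i < n) (hj : j < n)
    (h : p * n + i = q * n + j) : i = j ∧ p = q := by
  rcases Nat.lt_trichotomy p q with hc | hc | hc
  · exact absurd h (Nat.ne_of_lt (mul_add_lt hi hc))
  · subst hc
    have := Nat.add_left_cancel h
    exact ⟨this, rfl⟩
  · exact absurd h.symm (Nat.ne_of_lt (mul_add_lt hj hc))

open Classical in
/-- The per-world reference model: `T` itself at solution-worlds, the constant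
model at other worlds. -/
noncomputable def TwM (T : CausalModel S) (vlt : S.endo → S.endo → Prop)
    (hwf : WellFounded vlt) (w : S.Ctx × S.Asgn) : CausalModel S :=
  ⟨fun X u' o =>
    if w.2 = solFun T vlt hwf (fun _ => none) w.1 then T.F X u' o else w.2 X⟩

lemma TwM_eq (T : CausalModel S) (vlt : S.endo → S.endo → Prop)
    (hwf : WellFounded vlt) (w : S.Ctx × S.Asgn)
    (h : w.2 = solFun T vlt hwf (fun _ => none) w.1) :
    TwM T vlt hwf w = T := by
  classical
  unfold TwM
  have hF : (fun (X : S.endo) (u' : S.Ctx)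
      (o : ∀ Y : {Y : S.endo // Y ≠ X}, S.range Y.1) =>
      if w.2 = solFun T vlt hwf (fun _ => none) w.1 then T.F X u' o else w.2 X) = T.F := by
    funext X u' o
    rw [if_pos h]
  rw [hF]

lemma recHyp_TwM (T : CausalModel S) (vlt : S.endo → S.endo → Prop)
    (hrec : RecHyp T vlt) (hwf : WellFounded vlt) (w : S.Ctx × S.Asgn) :
    RecHyp (TwM T vlt hwf w) vlt := by
  classical
  intro X Y hXY u a a' hag
  show (if _ then T.F X u a else w.2 X) = (if _ then T.F X u a' else w.2 X)
  split_ifs with hc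
  · exact hrec X Y hXY u a a' hag
  · rfl

lemma TwM_sol_none (T : CausalModel S) (vlt : S.endo → S.endo → Prop)
    (hST : IsStrictTotalOrder S.endo vlt) (hrec : RecHyp T vlt)
    (hwf : WellFounded vlt) (w : S.Ctx × S.Asgn) :
    solFun (TwM T vlt hwf w) vlt hwf (fun _ => none) w.1 = w.2 := by
  classical
  symm
  apply solFun_unique (TwM T vlt hwf w) vlt hST (recHyp_TwM T vlt hrec hwf w) hwf
  intro X
  refine ⟨fun x hx => by simp at hx, fun _ => ?_⟩
  by_cases h : w.2 = solFun T vlt hwf (fun _ => none) w.1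
  · show w.2 X = if _ then T.F X w.1 _ else _
    rw [if_pos h]
    conv_lhs => rw [h]
    have := (solFun_isSolution T vlt hST hrec hwf (fun _ => none) w.1 X).2 rfl
    rw [this]
    refine F_congr T vlt hST hrec X w.1 _ _ ?_
    intro Z _
    rw [h]
  · show w.2 X = if _ then _ else w.2 X
    rw [if_neg h]

lemma rank_TwM_self (T : CausalModel S) (vlt : S.endo → S.endo → Prop)
    (hST : IsStrictTotalOrder S.endo vlt) (hrec : RecHyp T vlt)
    (hwf : WellFounded vlt) (w : S.Ctx × S.Asgn) :
    rank vlt (TwM T vlt hwf w) w.1 w.2 = 0 := by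
  classical
  have hv : viol (TwM T vlt hwf w) w.1 w.2 = ∅ := by
    unfold viol
    rw [Finset.filter_eq_empty_iff]
    intro X _
    simp only [not_not]
    have hs := TwM_sol_none T vlt hST hrec hwf w
    have := (solFun_isSolution (TwM T vlt hwf w) vlt hST
      (recHyp_TwM T vlt hrec hwf w) hwf (fun _ => none) w.1 X).2 rfl
    rw [hs] at this
    exact this
  unfold rank
  rw [hv, Finset.sum_empty]

lemma rank_TwM_pos (T : CausalModel S) (vlt : S.endo → S.endo → Prop)
    (hST : IsStrictTotalOrder S.endo vlt) (hrec : RecHyp T vlt)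
    (hwf : WellFounded vlt) (w : S.Ctx × S.Asgn) (b : S.Asgn) (hb : b ≠ w.2) :
    0 < rank vlt (TwM T vlt hwf w) w.1 b := by
  classical
  have hv : (viol (TwM T vlt hwf w) w.1 b).Nonempty := by
    rw [Finset.nonempty_iff_ne_empty]
    intro hemp
    apply hb
    have hsol : (TwM T vlt hwf w).isSolution (fun _ => none) w.1 b := by
      intro X
      refine ⟨fun x hx => by simp at hx, fun _ => ?_⟩
      have : X ∉ viol (TwM T vlt hwf w) w.1 b := by rw [hemp]; exact Finset.notMem_empty X
      simp only [viol, Finset.mem_filter, Finset.mem_univ, true_and, not_not] at this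
      exact this
    have := solFun_unique (TwM T vlt hwf w) vlt hST (recHyp_TwM T vlt hrec hwf w) hwf
      (fun _ => none) w.1 b hsol
    rw [this, TwM_sol_none T vlt hST hrec hwf w]
  exact Finset.sum_pos (fun i _ => pow_pos (by norm_num) _) hv

open Classical in
/-- The ranking function of worlds relative to a world `w`. -/
noncomputable def rhoF (T : CausalModel S) (vlt : S.endo → S.endo → Prop)
    (hwf : WellFounded vlt) (nW : ℕ) (fW : S.Ctx × S.Asgn → ℕ)
    (w v : S.Ctx × S.Asgn) : ℕ :=
  (if v.1 = w.1 then rank vlt (TwM T vlt hwf w) w.1 v.2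
    else (∑ X : S.endo, 2 ^ weight vlt X) + 1) * nW + fW v

lemma rank_le_bound (vlt : S.endo → S.endo → Prop) (M : CausalModel S)
    (u : S.Ctx) (a : S.Asgn) :
    rank vlt M u a ≤ ∑ X : S.endo, 2 ^ weight vlt X := by
  unfold rank
  exact Finset.sum_le_sum_of_subset (Finset.subset_univ _)

lemma rhoF_min (T : CausalModel S) (vlt : S.endo → S.endo → Prop)
    (hST : IsStrictTotalOrder S.endo vlt) (hrec : RecHyp T vlt)
    (hwf : WellFounded vlt) (nW : ℕ) (fW : S.Ctx × S.Asgn → ℕ)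
    (hflt : ∀ v, fW v < nW) :
    ∀ w u : S.Ctx × S.Asgn, u ≠ w →
      rhoF T vlt hwf nW fW w w < rhoF T vlt hwf nW fW w u := by
  classical
  intro w u hu
  unfold rhoF
  rw [if_pos rfl, rank_TwM_self T vlt hST hrec hwf w]
  have hpos : 0 < (if u.1 = w.1 then rank vlt (TwM T vlt hwf w) w.1 u.2
      else (∑ X : S.endo, 2 ^ weight vlt X) + 1) := by
    split_ifs with h1
    · apply rank_TwM_pos T vlt hST hrec hwf w u.2
      intro e
      exact hu (Prod.ext_iff.mpr ⟨h1, e⟩)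
    · omega
  exact mul_add_lt (hflt w) hpos

lemma rhoF_inj (T : CausalModel S) (vlt : S.endo → S.endo → Prop)
    (hwf : WellFounded vlt) (nW : ℕ) (fW : S.Ctx × S.Asgn → ℕ)
    (hfinj : Function.Injective fW) (hflt : ∀ v, fW v < nW)
    (w : S.Ctx × S.Asgn) {u v : S.Ctx × S.Asgn}
    (h : rhoF T vlt hwf nW fW w u = rhoF T vlt hwf nW fW w v) : u = v := by
  unfold rhoF at h
  obtain ⟨h1, -⟩ := mul_add_inj (hflt u) (hflt v) h
  exact hfinj h1

/-- The counterfactual structure built from a recursive causal model. -/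
noncomputable def buildM (T : CausalModel S) (vlt : S.endo → S.endo → Prop)
    (hST : IsStrictTotalOrder S.endo vlt) (hrec : RecHyp T vlt)
    (hwf : WellFounded vlt) (nW : ℕ) (fW : S.Ctx × S.Asgn → ℕ)
    (hflt : ∀ v, fW v < nW) : CStruct S.Atom where
  World := S.Ctx × S.Asgn
  worldFin := by
    classical
    exact inferInstance
  val := fun v p => v.2 p.1 = p.2
  R := fun w u v => rhoF T vlt hwf nW fW w u ≤ rhoF T vlt hwf nW fW w v
  self_mem := fun w => ⟨w, le_rfl⟩
  refl_on := fun _ _ _ => le_rfl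
  trans_on := fun _ _ _ _ _ _ _ h1 h2 => le_trans h1 h2
  centered := fun w u hu => ⟨(rhoF_min T vlt hST hrec hwf nW fW hflt w u hu).le,
    not_le.mpr (rhoF_min T vlt hST hrec hwf nW fW hflt w u hu)⟩

lemma buildM_cfSat (T : CausalModel S) (vlt : S.endo → S.endo → Prop)
    (hST : IsStrictTotalOrder S.endo vlt) (hrec : RecHyp T vlt)
    (hwf : WellFounded vlt) (nW : ℕ) (fW : S.Ctx × S.Asgn → ℕ)
    (hflt : ∀ v, fW v < nW)
    (w : S.Ctx × S.Asgn)
    (A B : (buildM T vlt hST hrec hwf nW fW hflt).World → Prop)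
    (v0 : (buildM T vlt hST hrec hwf nW fW hflt).World)
    (hA0 : A v0)
    (hm : ∀ v, A v → v ≠ v0 → rhoF T vlt hwf nW fW w v0 < rhoF T vlt hwf nW fW w v) :
    (buildM T vlt hST hrec hwf nW fW hflt).cfSat w A B ↔ B v0 := by
  have hc : (buildM T vlt hST hrec hwf nW fW hflt).closest w A = {v0} := by
    ext v
    simp only [CStruct.closest, Set.mem_setOf_eq, Set.mem_singleton_iff, CStruct.inW,
      CStruct.lt, buildM]
    constructor
    · rintro ⟨-, hAv, hmin2⟩
      by_contra hne
      have hlt := hm v hAv hne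
      exact hmin2 v0 hA0 ⟨hlt.le, not_le.mpr hlt⟩
    · rintro rfl
      refine ⟨⟨v, le_rfl⟩, hA0, ?_⟩
      rintro v' hAv' ⟨h1, h2⟩
      rcases eq_or_ne v' v with rfl | hne
      · exact h2 h1
      · exact h2 (hm v' hAv' hne).le
  unfold CStruct.cfSat
  rw [hc]
  simp

lemma buildM_satBasic (T : CausalModel S) (vlt : S.endo → S.endo → Prop)
    (hST : IsStrictTotalOrder S.endo vlt) (hrec : RecHyp T vlt)
    (hwf : WellFounded vlt) (nW : ℕ) (fW : S.Ctx × S.Asgn → ℕ)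
    (hflt : ∀ v, fW v < nW)
    (w : S.Ctx × S.Asgn) (g : S.Intervention) (X : S.endo) (x : S.range X) :
    satBasic S (buildM T vlt hST hrec hwf nW fW hflt) w g X x ↔
      solFun (TwM T vlt hwf w) vlt hwf g w.1 X = x := by
  classical
  have hsol := solFun_isSolution (TwM T vlt hwf w) vlt hST
    (recHyp_TwM T vlt hrec hwf w) hwf g w.1
  set b : S.Asgn := solFun (TwM T vlt hwf w) vlt hwf g w.1 with hb
  have hA0 : intAnte S (buildM T vlt hST hrec hwf nW fW hflt) g (w.1, b) :=
    fun Y y hgy => (hsol Y).1 y hgy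
  have hm : ∀ v, intAnte S (buildM T vlt hST hrec hwf nW fW hflt) g v → v ≠ (w.1, b) →
      rhoF T vlt hwf nW fW w (w.1, b) < rhoF T vlt hwf nW fW w v := by
    intro v hAv hne
    unfold rhoF
    rcases eq_or_ne v.1 w.1 with h1 | h1
    · have hv2 : v.2 ≠ b := by
        intro e
        exact hne (Prod.ext_iff.mpr ⟨h1, e⟩)
      have hr := rank_sol_lt (TwM T vlt hwf w) vlt hST (recHyp_TwM T vlt hrec hwf w) hwf
        g w.1 v.2 (fun Y y hgy => hAv Y y hgy) hv2
      rw [if_pos rfl, if_pos h1]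
      exact mul_add_lt (hflt _) hr
    · rw [if_pos rfl, if_neg h1]
      refine mul_add_lt (hflt _) ?_
      show rank vlt (TwM T vlt hwf w) w.1 b < (∑ X : S.endo, 2 ^ weight vlt X) + 1
      have := rank_le_bound vlt (TwM T vlt hwf w) w.1 b
      omega
  unfold satBasic
  rw [buildM_cfSat T vlt hST hrec hwf nW fW hflt w
    (intAnte S (buildM T vlt hST hrec hwf nW fW hflt) g)
    (fun v => (buildM T vlt hST hrec hwf nW fW hflt).val v ⟨X, x⟩) (w.1, b) hA0 hm]
  exact Iff.rfl

end Stmt7Aux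

/-- For every recursive causal model `T ∈ Trec(S)` there are a
recursive counterfactual structure `M ∈ Mrec(Φ_S)` and, for each context `u⃗`,
a world `w_{u⃗}` of `M` such that for all `φ ∈ Lprop(S)`:
`(T, u⃗) ⊨ φ` iff `(M, w_{u⃗}) ⊨ φ`. -/
theorem stmt7 (S : Signature) (T : CausalModel S) (hT : T.Recursive) :
    ∃ M : CStruct S.Atom, MRec S M ∧ ∃ wOf : S.Ctx → M.World,
      ∀ (u : S.Ctx) (φ : LProp S), T.sat u φ ↔ satL M (wOf u) φ := by
  classical
  obtain ⟨vlt, hST, hrec⟩ := hT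
  haveI := hST
  have hwf : WellFounded vlt := Finite.wellFounded_of_trans_of_irrefl vlt
  haveI : Fintype (S.Ctx × S.Asgn) := inferInstance
  obtain ⟨nW, fW, hfinj, hflt⟩ :
      ∃ (n : ℕ) (f : S.Ctx × S.Asgn → ℕ), Function.Injective f ∧ ∀ v, f v < n :=
    ⟨Fintype.card (S.Ctx × S.Asgn), fun v => ((Fintype.equivFin _) v : ℕ),
      fun a b h => (Fintype.equivFin _).injective (Fin.val_injective h),
      fun v => ((Fintype.equivFin _) v).isLt⟩
  refine ⟨buildM T vlt hST hrec hwf nW fW hflt, ⟨?_, ?_, ?_, ?_⟩, ?_⟩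
  · -- Acceptable
    intro w X
    exact ⟨w.2 X, rfl, fun y h => h.symm⟩
  · -- Full
    intro w a
    exact ⟨(w.1, a), ⟨(w.1, a), le_rfl⟩, fun X => rfl⟩
  · -- totalOrd
    intro w u v _ _ hne
    rcases Nat.lt_trichotomy (rhoF T vlt hwf nW fW w u) (rhoF T vlt hwf nW fW w v) with
      hc | hc | hc
    · exact Or.inl ⟨hc.le, not_le.mpr hc⟩
    · exact absurd (rhoF_inj T vlt hwf nW fW hfinj hflt w hc) hne
    · exact Or.inr ⟨hc.le, not_le.mpr hc⟩
  · -- recursive condition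
    intro w
    refine ⟨vlt, hST, ?_⟩
    intro W' Y hWY g _ _ y w'
    refine (buildM_satBasic T vlt hST hrec hwf nW fW hflt w _ W' w').trans
      (Iff.trans ?_ (buildM_satBasic T vlt hST hrec hwf nW fW hflt w g W' w').symm)
    rw [solFun_update (TwM T vlt hwf w) vlt hST (recHyp_TwM T vlt hrec hwf w) hwf g w.1 Y y W' hWY]
  · -- equivalence of satisfaction
    refine ⟨fun u => (u, solFun T vlt hwf (fun _ => none) u), ?_⟩
    intro u φ
    induction φ with
    | basic g X x =>
      simp only [CausalModel.sat, satL]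
      rw [buildM_satBasic T vlt hST hrec hwf nW fW hflt, TwM_eq T vlt hwf _ rfl]
      constructor
      · intro h
        exact h _ (solFun_isSolution T vlt hST hrec hwf g u)
      · intro h a ha
        rw [solFun_unique T vlt hST hrec hwf g u a ha]
        exact h
    | neg φ ih => simp only [CausalModel.sat, satL]; rw [ih]
    | and φ ψ ih1 ih2 => simp only [CausalModel.sat, satL]; rw [ih1, ih2]
end

section
/- For every recursive counterfactual structure M ∈ Mrec(Φ_S) and every world w of M, there exists a recursive causal model T ∈ Trec(S) such that for all formulas φ ∈ Lprop(S) and all contexts u⃗: (M, w) ⊨ φ if and only if (T, u⃗) ⊨ φ. -/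
/-! ### Auxiliary definitions for the proof of Statement 8 -/

open Classical in
/-- The intervention setting every `Z` with `vlt Z X` to `c Z`. -/
noncomputable def tgtAux (S : Signature) (vlt : S.endo → S.endo → Prop)
    (X : S.endo) (c : S.Asgn) : S.Intervention :=
  fun Z => if vlt Z X then some (c Z) else none

theorem tgtAux_congr {S : Signature} {vlt : S.endo → S.endo → Prop} {X : S.endo}
    {c c' : S.Asgn} (h : ∀ Z, vlt Z X → c Z = c' Z) :
    tgtAux S vlt X c = tgtAux S vlt X c' := by
  funext Z
  unfold tgtAux
  by_cases hz : vlt Z X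
  · rw [if_pos hz, if_pos hz, h Z hz]
  · rw [if_neg hz, if_neg hz]

open Classical in
/-- The structural equations determined by a "closest-world value" function `A`. -/
noncomputable def mkFAux (S : Signature) (vlt : S.endo → S.endo → Prop)
    (hirr : ∀ X, ¬ vlt X X) (A : S.Intervention → S.Asgn) :
    ∀ X : S.endo, S.Ctx → (∀ Y : {Y : S.endo // Y ≠ X}, S.range Y.1) → S.range X :=
  fun X _ a =>
    A (fun Z => if h : vlt Z X then some (a ⟨Z, fun he => hirr X (he ▸ h)⟩) else none) X

theorem mkFAux_eq {S : Signature} (vlt : S.endo → S.endo → Prop)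
    (hirr : ∀ X, ¬ vlt X X) (A : S.Intervention → S.Asgn) (X : S.endo) (u : S.Ctx)
    (b : ∀ Y : {Y : S.endo // Y ≠ X}, S.range Y.1) (c : S.Asgn)
    (hbc : ∀ Y : {Y : S.endo // Y ≠ X}, b Y = c Y.1) :
    mkFAux S vlt hirr A X u b = A (tgtAux S vlt X c) X := by
  classical
  unfold mkFAux
  have h : ∀ Z, (if h : vlt Z X then some (b ⟨Z, fun he => hirr X (he ▸ h)⟩) else none)
      = tgtAux S vlt X c Z := by
    intro Z
    unfold tgtAux
    by_cases h : vlt Z X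
    · rw [dif_pos h, if_pos h, hbc]
    · rw [dif_neg h, if_neg h]
  rw [funext h]

/-- For every recursive counterfactual structure `M ∈ Mrec(Φ_S)`
and world `w` there is a recursive causal model `T ∈ Trec(S)` such that for all
`φ ∈ Lprop(S)` and all contexts `u⃗`: `(M, w) ⊨ φ` iff `(T, u⃗) ⊨ φ`. -/
theorem stmt8 (S : Signature) (M : CStruct S.Atom) (hM : MRec S M) (w : M.World) :
    ∃ T : CausalModel S, T.Recursive ∧
      ∀ (φ : LProp S) (u : S.Ctx), satL M w φ ↔ T.sat u φ := by
  classical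
  obtain ⟨hAcc, hFull, hTot, hRecAll⟩ := hM
  obtain ⟨vlt, hSTO, hrec⟩ := hRecAll w
  haveI := hSTO
  have hirr : ∀ X, ¬ vlt X X := fun X => irrefl_of vlt X
  -- each intervention has a unique closest world
  have hclos : ∀ g : S.Intervention, ∃ v₀, M.closest w (intAnte S M g) = {v₀} := by
    intro g
    have hne : ∃ v, M.inW w v ∧ intAnte S M g v := by
      obtain ⟨v, hv1, hv2⟩ := hFull w (fun Z => (g Z).getD (Classical.arbitrary _))
      refine ⟨v, hv1, fun Y y hY => ?_⟩
      have h := hv2 Y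
      rw [hY] at h
      simpa using h
    set σ := {v : M.World // M.inW w v ∧ intAnte S M g v} with hσ
    haveI : Nonempty σ := ⟨⟨hne.choose, hne.choose_spec⟩⟩
    let r : σ → σ → Prop := fun a b => M.lt w a.1 b.1
    haveI : IsIrrefl σ r := ⟨fun a h => h.2 h.1⟩
    haveI : IsTrans σ r := by
      refine ⟨fun a b c hab hbc => ?_⟩
      refine ⟨M.trans_on w a.1 b.1 c.1 a.2.1 b.2.1 c.2.1 hab.1 hbc.1, fun hca => ?_⟩
      exact hbc.2 (M.trans_on w c.1 a.1 b.1 c.2.1 a.2.1 b.2.1 hca hab.1)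
    obtain ⟨m, -, hmin⟩ := (Finite.wellFounded_of_trans_of_irrefl r).has_min Set.univ
      ⟨Classical.arbitrary σ, trivial⟩
    refine ⟨m.1, Set.ext fun v => ?_⟩
    simp only [Set.mem_singleton_iff]
    constructor
    · rintro ⟨hvW, hvA, hvmin⟩
      by_contra hne'
      rcases hTot w v m.1 hvW m.2.1 hne' with hlt | hlt
      · exact hmin ⟨v, hvW, hvA⟩ trivial hlt
      · exact hvmin m.1 m.2.2 hlt
    · rintro rfl
      exact ⟨m.2.1, m.2.2, fun v' hv' hlt => hmin ⟨v', ⟨m.1, hlt.1⟩, hv'⟩ trivial hlt⟩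
  choose cw hcw using hclos
  have hcwmem : ∀ g, cw g ∈ M.closest w (intAnte S M g) := by
    intro g; rw [hcw g]; rfl
  have hAex : ∀ g X, ∃ x, M.val (cw g) ⟨X, x⟩ := fun g X => (hAcc (cw g) X).exists
  choose A hA using hAex
  have hAuniq : ∀ g X x, M.val (cw g) ⟨X, x⟩ → A g X = x := by
    intro g X x hx
    obtain ⟨x', -, hx'⟩ := hAcc (cw g) X
    exact (hx' _ (hA g X)).trans (hx' _ hx).symm
  -- basic formulas read off the value at the closest world
  have L1 : ∀ g X x, satBasic S M w g X x ↔ A g X = x := by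
    intro g X x
    unfold satBasic CStruct.cfSat
    rw [hcw g]
    constructor
    · intro h
      exact hAuniq g X x (h (cw g) rfl)
    · rintro rfl v hv
      have hv' : v = cw g := hv
      rw [hv']
      exact hA g X
  have Lc : ∀ g X x, g X = some x → A g X = x := fun g X x h =>
    hAuniq g X x ((hcwmem g).2.1 X x h)
  -- adding an intervention with the realized value does not change the closest world
  have Lb : ∀ g Z, g Z = none → cw (Function.update g Z (some (A g Z))) = cw g := by
    intro g Z hZ
    have hante : ∀ v, intAnte S M (Function.update g Z (some (A g Z))) v →
        intAnte S M g v := by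
      intro v hv Y y hY
      apply hv Y y
      rcases eq_or_ne Y Z with h | h
      · subst h; rw [hY] at hZ; cases hZ
      · rw [Function.update_of_ne h]; exact hY
    have hmem : cw g ∈ M.closest w (intAnte S M (Function.update g Z (some (A g Z)))) := by
      refine ⟨(hcwmem g).1, ?_, ?_⟩
      · intro Y y hY
        rcases eq_or_ne Y Z with h | h
        · subst h
          rw [Function.update_self] at hY
          obtain rfl : A g Y = y := Option.some.inj hY
          exact hA g Y
        · rw [Function.update_of_ne h] at hY
          exact (hcwmem g).2.1 Y y hY
      · intro v' hv' hlt
        exact (hcwmem g).2.2 v' (hante v' hv') hlt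
    rw [hcw _] at hmem
    exact (Set.mem_singleton_iff.mp hmem).symm
  have LbA : ∀ g Z, g Z = none → ∀ X,
      A (Function.update g Z (some (A g Z))) X = A g X := by
    intro g Z hZ X
    have h := hA (Function.update g Z (some (A g Z))) X
    rw [Lb g Z hZ] at h
    exact (hAuniq g X _ h).symm
  -- recursiveness: intervening on a later variable does not change earlier values
  have Lr : ∀ W' Y, vlt W' Y → ∀ g : S.Intervention, g W' = none → g Y = none →
      ∀ y : S.range Y, A (Function.update g Y (some y)) W' = A g W' := by
    intro W' Y hWY g hW' hY y
    have h := (hrec W' Y hWY g hW' hY y (A g W')).mpr ((L1 g W' (A g W')).mpr rfl)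
    exact (L1 _ W' (A g W')).mp h
  -- main lemma: composition along the order
  have Lmain : ∀ (X : S.endo) (g : S.Intervention), g X = none →
      A g X = A (tgtAux S vlt X (A g)) X := by
    intro X
    suffices h : ∀ (n : ℕ) (g : S.Intervention),
        (Finset.univ.filter (fun Y => (g Y).isSome ∧ ¬ vlt Y X)).card
          + (Finset.univ.filter (fun Z => vlt Z X ∧ g Z = none)).card = n →
        g X = none → A g X = A (tgtAux S vlt X (A g)) X by
      intro g hg
      exact h _ g rfl hg
    intro n
    induction n using Nat.strong_induction_on with
    | _ n ih =>
      intro g hn hgX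
      by_cases h1 : ∃ Y, (g Y).isSome ∧ ¬ vlt Y X
      · obtain ⟨Y, hYs, hYnlt⟩ := h1
        obtain ⟨y, hy⟩ := Option.isSome_iff_exists.mp hYs
        have hXY : X ≠ Y := by rintro rfl; rw [hgX] at hy; cases hy
        have hvXY : vlt X Y := by
          rcases trichotomous_of vlt X Y with h | h | h
          · exact h
          · exact absurd h hXY
          · exact absurd h hYnlt
        set g' := Function.update g Y none with hg'def
        have hgeq : Function.update g' Y (some y) = g := by
          funext Z
          rcases eq_or_ne Z Y with h | h
          · subst h; rw [Function.update_self, hy]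
          · rw [Function.update_of_ne h, hg'def, Function.update_of_ne h]
        have hg'X : g' X = none := by rw [hg'def, Function.update_of_ne hXY]; exact hgX
        have hg'Y : g' Y = none := by rw [hg'def, Function.update_self]
        have hAX : A g' X = A g X := by
          have h := Lr X Y hvXY g' hg'X hg'Y y
          rw [hgeq] at h
          exact h.symm
        have hAZ : ∀ Z, vlt Z X → A g' Z = A g Z := by
          intro Z hZX
          have hZY : vlt Z Y := trans_of vlt hZX hvXY
          have hZneY : Z ≠ Y := by rintro rfl; exact hYnlt hZX
          cases hgz : g Z with
          | some z =>
            have hg'z : g' Z = some z := by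
              rw [hg'def, Function.update_of_ne hZneY]; exact hgz
            rw [Lc g' Z z hg'z, Lc g Z z hgz]
          | none =>
            have hg'z : g' Z = none := by
              rw [hg'def, Function.update_of_ne hZneY]; exact hgz
            have h := Lr Z Y hZY g' hg'z hg'Y y
            rw [hgeq] at h
            exact h.symm
        have e1 : Finset.univ.filter (fun Y' => (g' Y').isSome ∧ ¬ vlt Y' X)
            = (Finset.univ.filter (fun Y' => (g Y').isSome ∧ ¬ vlt Y' X)).erase Y := by
          ext Z
          simp only [Finset.mem_erase, Finset.mem_filter, Finset.mem_univ, true_and]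
          constructor
          · rintro ⟨hs, hnl⟩
            have hZY : Z ≠ Y := by
              rintro rfl; rw [hg'def, Function.update_self] at hs; cases hs
            rw [hg'def, Function.update_of_ne hZY] at hs
            exact ⟨hZY, hs, hnl⟩
          · rintro ⟨hZY, hs, hnl⟩
            rw [hg'def, Function.update_of_ne hZY]
            exact ⟨hs, hnl⟩
        have e2 : Finset.univ.filter (fun Z => vlt Z X ∧ g' Z = none)
            = Finset.univ.filter (fun Z => vlt Z X ∧ g Z = none) := by
          ext Z
          simp only [Finset.mem_filter, Finset.mem_univ, true_and]
          rcases eq_or_ne Z Y with h | h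
          · subst h
            constructor
            · rintro ⟨h', -⟩; exact absurd h' hYnlt
            · rintro ⟨h', -⟩; exact absurd h' hYnlt
          · rw [hg'def, Function.update_of_ne h]
        have hYmem : Y ∈ Finset.univ.filter (fun Y' => (g Y').isSome ∧ ¬ vlt Y' X) :=
          Finset.mem_filter.mpr ⟨Finset.mem_univ _, hYs, hYnlt⟩
        have hcard : (Finset.univ.filter (fun Y' => (g' Y').isSome ∧ ¬ vlt Y' X)).card
            + (Finset.univ.filter (fun Z => vlt Z X ∧ g' Z = none)).card < n := by
          rw [e1, e2, ← hn]
          exact Nat.add_lt_add_right (Finset.card_erase_lt_of_mem hYmem) _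
        have hmain := ih _ hcard g' rfl hg'X
        have htg : tgtAux S vlt X (A g') = tgtAux S vlt X (A g) := tgtAux_congr hAZ
        rw [hAX, htg] at hmain
        exact hmain
      · by_cases h2 : ∃ Z, vlt Z X ∧ g Z = none
        · obtain ⟨Z, hZX, hZn⟩ := h2
          have hXZ : X ≠ Z := by rintro rfl; exact absurd hZX (hirr X)
          set g' := Function.update g Z (some (A g Z)) with hg'def
          have hAeq : ∀ X', A g' X' = A g X' := LbA g Z hZn
          have hg'X : g' X = none := by
            rw [hg'def, Function.update_of_ne hXZ]; exact hgX
          have e1 : Finset.univ.filter (fun Y' => (g' Y').isSome ∧ ¬ vlt Y' X)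
              = Finset.univ.filter (fun Y' => (g Y').isSome ∧ ¬ vlt Y' X) := by
            ext W'
            simp only [Finset.mem_filter, Finset.mem_univ, true_and]
            rcases eq_or_ne W' Z with h | h
            · subst h
              constructor
              · rintro ⟨-, hnl⟩; exact absurd hZX hnl
              · rintro ⟨-, hnl⟩; exact absurd hZX hnl
            · rw [hg'def, Function.update_of_ne h]
          have e2 : Finset.univ.filter (fun Z' => vlt Z' X ∧ g' Z' = none)
              = (Finset.univ.filter (fun Z' => vlt Z' X ∧ g Z' = none)).erase Z := by
            ext W'
            simp only [Finset.mem_erase, Finset.mem_filter, Finset.mem_univ, true_and]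
            constructor
            · rintro ⟨hl, hs⟩
              have hWZ : W' ≠ Z := by
                rintro rfl; rw [hg'def, Function.update_self] at hs; cases hs
              rw [hg'def, Function.update_of_ne hWZ] at hs
              exact ⟨hWZ, hl, hs⟩
            · rintro ⟨hWZ, hl, hs⟩
              rw [hg'def, Function.update_of_ne hWZ]
              exact ⟨hl, hs⟩
          have hZmem : Z ∈ Finset.univ.filter (fun Z' => vlt Z' X ∧ g Z' = none) :=
            Finset.mem_filter.mpr ⟨Finset.mem_univ _, hZX, hZn⟩
          have hcard : (Finset.univ.filter (fun Y' => (g' Y').isSome ∧ ¬ vlt Y' X)).card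
              + (Finset.univ.filter (fun Z' => vlt Z' X ∧ g' Z' = none)).card < n := by
            rw [e1, e2, ← hn]
            exact Nat.add_lt_add_left (Finset.card_erase_lt_of_mem hZmem) _
          have hmain := ih _ hcard g' rfl hg'X
          have htg : tgtAux S vlt X (A g') = tgtAux S vlt X (A g) :=
            tgtAux_congr (fun Z' _ => hAeq Z')
          rw [hAeq X, htg] at hmain
          exact hmain
        · -- base case: g already coincides with the target intervention
          have hgeq : g = tgtAux S vlt X (A g) := by
            funext Z
            by_cases h : vlt Z X
            · cases hz : g Z with
              | none => exact absurd ⟨Z, h, hz⟩ h2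
              | some z =>
                unfold tgtAux
                rw [if_pos h, Lc g Z z hz]
            · cases hz : g Z with
              | none => unfold tgtAux; rw [if_neg h]
              | some z =>
                refine absurd ⟨Z, ?_, h⟩ h1
                rw [hz]; rfl
          conv_rhs => rw [← hgeq]
  -- the constructed causal model
  have hsol : ∀ (g : S.Intervention) (u : S.Ctx),
      CausalModel.isSolution ⟨mkFAux S vlt hirr A⟩ g u (fun X => A g X) := by
    intro g u X
    refine ⟨fun x hx => Lc g X x hx, fun hx => ?_⟩
    show A g X = mkFAux S vlt hirr A X u (fun Y => A g Y.1)
    rw [mkFAux_eq vlt hirr A X u (fun Y => A g Y.1) (A g) (fun Y => rfl)]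
    exact Lmain X g hx
  have huniq : ∀ (g : S.Intervention) (u : S.Ctx) (a : S.Asgn),
      CausalModel.isSolution ⟨mkFAux S vlt hirr A⟩ g u a → ∀ X, a X = A g X := by
    intro g u a ha X
    refine (Finite.wellFounded_of_trans_of_irrefl vlt).induction
      (C := fun X => a X = A g X) X ?_
    intro X ih
    cases hgx : g X with
    | some x => rw [(ha X).1 x hgx, Lc g X x hgx]
    | none =>
      rw [(ha X).2 hgx]
      show mkFAux S vlt hirr A X u (fun Y => a Y.1) = A g X
      rw [mkFAux_eq vlt hirr A X u (fun Y => a Y.1) a (fun Y => rfl)]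
      have htg : tgtAux S vlt X a = tgtAux S vlt X (A g) :=
        tgtAux_congr (fun Z hZ => ih Z hZ)
      rw [htg]
      exact (Lmain X g hgx).symm
  have hTrec : (⟨mkFAux S vlt hirr A⟩ : CausalModel S).Recursive := by
    refine ⟨vlt, hSTO, ?_⟩
    intro X Y hXY u a a' haa
    show mkFAux S vlt hirr A X u a = mkFAux S vlt hirr A X u a'
    rw [mkFAux_eq vlt hirr A X u a
        (fun Z => if h : Z = X then Classical.arbitrary (S.range Z) else a ⟨Z, h⟩)
        (fun Y' => by
          show a Y' = if h : Y'.1 = X then Classical.arbitrary (S.range Y'.1) else a ⟨Y'.1, h⟩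
          rw [dif_neg Y'.2]),
      mkFAux_eq vlt hirr A X u a'
        (fun Z => if h : Z = X then Classical.arbitrary (S.range Z) else a' ⟨Z, h⟩)
        (fun Y' => by
          show a' Y' = if h : Y'.1 = X then Classical.arbitrary (S.range Y'.1) else a' ⟨Y'.1, h⟩
          rw [dif_neg Y'.2])]
    have htg : tgtAux S vlt X
          (fun Z => if h : Z = X then Classical.arbitrary (S.range Z) else a ⟨Z, h⟩)
        = tgtAux S vlt X
          (fun Z => if h : Z = X then Classical.arbitrary (S.range Z) else a' ⟨Z, h⟩) := by
      apply tgtAux_congr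
      intro Z hZX
      have hZX' : Z ≠ X := fun h => hirr X (h ▸ hZX)
      rw [dif_neg hZX', dif_neg hZX']
      apply haa
      rintro rfl
      exact hirr X (trans_of vlt hXY hZX)
    rw [htg]
  refine ⟨⟨mkFAux S vlt hirr A⟩, hTrec, ?_⟩
  intro φ u
  induction φ with
  | basic g X x =>
    show satBasic S M w g X x ↔
      ∀ a, CausalModel.isSolution ⟨mkFAux S vlt hirr A⟩ g u a → a X = x
    rw [L1 g X x]
    constructor
    · intro h a ha
      rw [huniq g u a ha X, h]
    · intro h
      exact h _ (hsol g u)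
  | neg φ ihφ => exact not_congr ihφ
  | and φ ψ ih1 ih2 => exact and_congr ih1 ih2
end
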